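/- Let λ > 0, α > 0, β > 0, and define for T > 0 and δ ≥ T the energy penalty ℰ(T, δ) = [e^{-λT}(β − λ(βδ + α)) + λ(βδ + α + e^{-λδ}(βT + α)) − β] / (λ(1 − e^{-λT})). Then for all T > 0 and all δ ≥ T, ℰ(T, δ) ≥ inf_{t > 0} ℰ(t, t); that is, the infimum of ℰ over {(T, δ) : T > 0, δ ≥ T} equals the infimum of ℰ(t, t) over t > 0, so under an exponentially distributed time to event an optimal offset satisfies δ* = T*. -/
import Mathlib


open Real

/-- For an exponentially distributed time to event with rate `r > 0`, the offset energy
penalty `ℰ(T, δ)` for `T > 0`, `δ ≥ T` is never smaller than the infimum of the no-offset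
penalties `ℰ(t, t)` over `t > 0`: the offset cannot help, i.e. `δ* = T*` is optimal. -/
theorem offset_useless_exponential (r α β : ℝ) (hr : 0 < r) (hα : 0 < α) (hβ : 0 < β)
    (E : ℝ → ℝ → ℝ)
    (hE : ∀ T δ : ℝ, E T δ =
      (Real.exp (-(r * T)) * (β - r * (β * δ + α))
          + r * (β * δ + α + Real.exp (-(r * δ)) * (β * T + α)) - β)
        / (r * (1 - Real.exp (-(r * T))))) :
    ∀ T : ℝ, 0 < T → ∀ δ : ℝ, T ≤ δ →
      (⨅ t : Set.Ioi (0 : ℝ), E t t) ≤ E T δ := by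
  intro T hT δ hδ
  have hδ0 : 0 < δ := lt_of_lt_of_le hT hδ
  have hexp : ∀ t : ℝ, 0 < t → Real.exp (-(r * t)) < 1 := by
    intro t ht
    rw [Real.exp_lt_one_iff]
    nlinarith
  have key : ∀ t : ℝ, 0 < t →
      E t t = (β * t + α) / (1 - Real.exp (-(r * t))) - β / r := by
    intro t ht
    have h1 := hexp t ht
    have h2 : 1 - Real.exp (-(r * t)) ≠ 0 := by linarith
    rw [hE]
    field_simp
    ring
  have hbdd : BddBelow (Set.range fun t : Set.Ioi (0 : ℝ) => E t t) := by
    refine ⟨α - β / r, ?_⟩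
    rintro x ⟨⟨t, ht⟩, rfl⟩
    have ht' : 0 < t := ht
    have h1 := hexp t ht'
    have h2 : 0 < 1 - Real.exp (-(r * t)) := by linarith
    have hα' : α ≤ (β * t + α) / (1 - Real.exp (-(r * t))) := by
      rw [le_div_iff₀ h2]
      nlinarith [Real.exp_pos (-(r * t))]
    simpa [key t ht'] using by linarith
  have hmT : (⨅ t : Set.Ioi (0 : ℝ), E t t) ≤ E T T := ciInf_le hbdd ⟨T, hT⟩
  have hmδ : (⨅ t : Set.Ioi (0 : ℝ), E t t) ≤ E δ δ := ciInf_le hbdd ⟨δ, hδ0⟩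
  have h1 := hexp T hT
  have h2 := hexp δ hδ0
  have h1' : 1 - Real.exp (-(r * T)) ≠ 0 := by linarith
  have h2' : 1 - Real.exp (-(r * δ)) ≠ 0 := by linarith
  have hconv : E T δ
      = (1 - Real.exp (-(r * δ))) * E δ δ + Real.exp (-(r * δ)) * E T T := by
    rw [hE, hE, hE]
    field_simp
    ring
  have he1 : 0 < Real.exp (-(r * δ)) := Real.exp_pos _
  rw [hconv]
  nlinarith [mul_le_mul_of_nonneg_left hmδ (by linarith : (0:ℝ) ≤ 1 - Real.exp (-(r * δ))),
    mul_le_mul_of_nonneg_left hmT he1.le]
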